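/- Let C be a closed, pointed, convex cone. For any x ∈ C, the minimal exposed face of C containing x equals the intersection of C with the convex tangent space L_C(x). -/

import Mathlib

open Set RealInnerProductSpace Metric

section Defs

variable {E : Type*} [AddCommGroup E] [Module ℝ E]

/-- `C` is a convex cone (as a set). -/
def IsConvexCone (C : Set E) : Prop :=
  Convex ℝ C ∧ ∀ x ∈ C, ∀ t : ℝ, 0 ≤ t → t • x ∈ C

/-- A cone is pointed if it contains no lines through the origin. -/
def IsPointedCone (C : Set E) : Prop := C ∩ (-C) ⊆ {0}

/-- `x` generates an extreme ray of `C`. -/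
def IsExtremeRayGen (C : Set E) (x : E) : Prop :=
  x ∈ C ∧ x ≠ 0 ∧ ∀ y ∈ C, ∀ z ∈ C, y + z = x → ∃ t : ℝ, 0 ≤ t ∧ y = t • x

/-- `F` is a face of the convex cone `C`. -/
def IsFace (C F : Set E) : Prop :=
  F ⊆ C ∧ ∀ x ∈ C, ∀ y ∈ C, x + y ∈ F → x ∈ F ∧ y ∈ F

/-- The minimal face of `C` containing `x` (the intersection of all faces containing `x`). -/
def minFace (C : Set E) (x : E) : Set E := ⋂₀ {F | IsFace C F ∧ x ∈ F}

variable [TopologicalSpace E]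

/-- The cone of feasible directions from `x` into `C`. -/
def feasDir (C : Set E) (x : E) : Set E :=
  {v | ∃ t : ℝ, 0 ≤ t ∧ ∃ z ∈ C, v = t • (z - x)}

/-- The tangent cone of `C` at `x`: the closure of the cone of feasible directions. -/
def tangentCone' (C : Set E) (x : E) : Set E := closure (feasDir C x)

/-- The convex tangent space of `C` at `x`: the lineality space of the tangent cone. -/
def ctSpace (C : Set E) (x : E) : Set E := tangentCone' C x ∩ -(tangentCone' C x)

/-- `C` is `k`-Terracini convex: for any `k` generators of extreme rays, the convex tangent
space at their sum equals the (subspace) sum of the individual convex tangent spaces. -/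
def kTerracini (C : Set E) (k : ℕ) : Prop :=
  ∀ x : Fin k → E, (∀ i, IsExtremeRayGen C (x i)) →
    ctSpace C (∑ i, x i) = (Submodule.span ℝ (⋃ i, ctSpace C (x i)) : Set E)

end Defs

section InnerDefs

variable {E : Type*} [NormedAddCommGroup E] [InnerProductSpace ℝ E]

/-- The normal cone of `C` at `x`: linear functionals (identified with vectors) that are
nonpositive on `C` and vanish at `x`. -/
def normalCone' (C : Set E) (x : E) : Set E :=
  {ℓ : E | (∀ z ∈ C, ⟪ℓ, z⟫ ≤ 0) ∧ ⟪ℓ, x⟫ = 0}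

/-- `F` is an exposed face of the cone `C`. -/
def IsExposedFace (C F : Set E) : Prop :=
  ∃ ℓ : E, (∀ z ∈ C, ⟪ℓ, z⟫ ≤ 0) ∧ F = {z ∈ C | ⟪ℓ, z⟫ = 0}

/-- The set of normalized generators of extreme rays of `K`. -/
def normExt (K : Set E) : Set E := {x | IsExtremeRayGen K x ∧ ‖x‖ = 1}

/-- `K` is `k`-neighborly. -/
def kNeighborly (K : Set E) (k : ℕ) : Prop :=
  ∀ I : Set E, I ⊆ normExt K → I.Finite → I.ncard ≤ k →
    ∃ ℓ : E, (∀ x ∈ I, ⟪ℓ, x⟫ = 0) ∧ ∀ x ∈ normExt K \ I, 0 < ⟪ℓ, x⟫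

/-- `K` is non-degenerate `k`-neighborly: the exposing functional additionally satisfies a
local quadratic growth condition near the exposed extreme rays. -/
def nonDegNeighborly (K : Set E) (k : ℕ) : Prop :=
  ∀ I : Set E, I ⊆ normExt K → I.Finite → I.ncard ≤ k →
    ∃ (ε μ : ℝ) (ℓ : E), 0 < ε ∧ 0 < μ ∧
      (∀ x ∈ I, ⟪ℓ, x⟫ = 0) ∧ (∀ x ∈ normExt K \ I, 0 < ⟪ℓ, x⟫) ∧
      ∀ x ∈ normExt K, (∃ z ∈ I, dist x z < ε) →
        μ * (Metric.infDist x I) ^ 2 ≤ ⟪ℓ, x⟫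

/-- `K` is regular: linear functionals nonnegative on `K` vanishing at an extreme ray grow at
most quadratically near that extreme ray, along normalized extreme rays. -/
def RegularCone (K : Set E) : Prop :=
  ∀ x₀ : E, IsExtremeRayGen K x₀ → ∀ ℓ : E, (∀ z ∈ K, 0 ≤ ⟪ℓ, z⟫) → ⟪ℓ, x₀⟫ = 0 →
    ∃ δ ν : ℝ, 0 < δ ∧ 0 < ν ∧
      ∀ x ∈ normExt K, ‖x - x₀‖ < δ → ⟪ℓ, x⟫ ≤ ν * ‖x - x₀‖ ^ 2

end InnerDefs

/-- For a closed, pointed, convex cone `C` and `x ∈ C`, the minimal exposed face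
of `C` containing `x` equals `C ∩ L_C(x)`. -/
theorem minExposedFace_eq_inter_ctSpace {d : ℕ}
    (C : Set (EuclideanSpace ℝ (Fin d)))
    (hC : IsConvexCone C) (hclosed : IsClosed C) (hpointed : IsPointedCone C)
    (x : EuclideanSpace ℝ (Fin d)) (hx : x ∈ C) :
    ⋂₀ {F | IsExposedFace C F ∧ x ∈ F} = C ∩ ctSpace C x := by
  classical
  have h0C : (0 : EuclideanSpace ℝ (Fin d)) ∈ C := by
    simpa using hC.2 x hx 0 le_rfl
  -- the feasible direction cone as a `ConvexCone`
  set S : ConvexCone ℝ (EuclideanSpace ℝ (Fin d)) :=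
    { carrier := feasDir C x
      smul_mem' := by
        rintro c hc v ⟨t, ht, z, hz, rfl⟩
        exact ⟨c * t, mul_nonneg hc.le ht, z, hz, (mul_smul c t _).symm⟩
      add_mem' := by
        rintro v ⟨t₁, ht₁, z₁, hz₁, rfl⟩ w ⟨t₂, ht₂, z₂, hz₂, rfl⟩
        rcases eq_or_lt_of_le (add_nonneg ht₁ ht₂) with hs | hs
        · have h1 : t₁ = 0 := by linarith [ht₁, ht₂, hs.symm ▸ (rfl : t₁ + t₂ = t₁ + t₂)]
          have h2 : t₂ = 0 := by linarith [hs.symm ▸ (rfl : t₁ + t₂ = t₁ + t₂)]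
          refine ⟨0, le_rfl, x, hx, ?_⟩
          simp [h1, h2]
        · set s := t₁ + t₂ with hsdef
          refine ⟨s, hs.le, (t₁ / s) • z₁ + (t₂ / s) • z₂, ?_, ?_⟩
          · exact hC.1 hz₁ hz₂ (div_nonneg ht₁ hs.le) (div_nonneg ht₂ hs.le)
              (by field_simp; exact hsdef.symm)
          · have hns : s ≠ 0 := ne_of_gt hs
            match_scalars <;> (simp only [hsdef] at hns ⊢; field_simp; try ring) } with hSdef
  have hScarrier : (S : Set (EuclideanSpace ℝ (Fin d))) = feasDir C x := rfl
  have hSne : (S : Set (EuclideanSpace ℝ (Fin d))).Nonempty :=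
    ⟨0, ⟨0, le_rfl, x, hx, by simp⟩⟩
  -- the tangent cone as a closed `ConvexCone`
  set K : ConvexCone ℝ (EuclideanSpace ℝ (Fin d)) := S.closure with hKdef
  have hKcarrier : (K : Set (EuclideanSpace ℝ (Fin d))) = tangentCone' C x := by
    rw [hKdef, ConvexCone.coe_closure, hScarrier]; rfl
  have hKne : (K : Set (EuclideanSpace ℝ (Fin d))).Nonempty := by
    rw [hKcarrier]
    exact ⟨0, subset_closure ⟨0, le_rfl, x, hx, by simp⟩⟩
  have hKclosed : IsClosed (K : Set (EuclideanSpace ℝ (Fin d))) := by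
    rw [hKcarrier]; exact isClosed_closure
  -- membership facts in the feasible direction cone
  have hmemS : ∀ z ∈ C, z - x ∈ feasDir C x := fun z hz =>
    ⟨1, zero_le_one, z, hz, (one_smul ℝ _).symm⟩
  have hxS : x ∈ feasDir C x := by
    have h2x : (2 : ℝ) • x ∈ C := hC.2 x hx 2 (by norm_num)
    have := hmemS _ h2x
    have h : (2 : ℝ) • x - x = x := by
      rw [two_smul]; abel
    rwa [h] at this
  have hnxS : -x ∈ feasDir C x := by
    have := hmemS 0 h0C
    simpa using this
  -- (A) every normal-cone functional is nonpositive on the tangent cone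
  have keyA : ∀ ℓ ∈ normalCone' C x, ∀ v ∈ tangentCone' C x, ⟪ℓ, v⟫ ≤ 0 := by
    rintro ℓ ⟨hℓC, hℓx⟩ v hv
    have hsub : feasDir C x ⊆ {w | ⟪ℓ, w⟫ ≤ 0} := by
      rintro w ⟨t, ht, z, hz, rfl⟩
      have : ⟪ℓ, t • (z - x)⟫ = t * (⟪ℓ, z⟫ - ⟪ℓ, x⟫) := by
        rw [real_inner_smul_right, inner_sub_right]
      rw [Set.mem_setOf_eq, this, hℓx, sub_zero]
      exact mul_nonpos_of_nonneg_of_nonpos ht (hℓC z hz)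
    have hclosedset : IsClosed {w : EuclideanSpace ℝ (Fin d) | ⟪ℓ, w⟫ ≤ 0} :=
      isClosed_le (Continuous.inner continuous_const continuous_id) continuous_const
    exact (hclosedset.closure_subset_iff.2 hsub) hv
  -- (B) separation: points outside the tangent cone are separated by a normal functional
  have keyB : ∀ v, v ∉ tangentCone' C x →
      ∃ ℓ ∈ normalCone' C x, 0 < ⟪ℓ, v⟫ := by
    intro v hv
    have hv' : v ∉ K := by rw [← SetLike.mem_coe, hKcarrier]; exact hv
    obtain ⟨y, hy1, hy2⟩ : ∃ y, (∀ w ∈ K, 0 ≤ ⟪w, y⟫) ∧ ⟪y, v⟫ < 0 :=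
      (ProperCone.hyperplane_separation' (x₀ := v)
        ⟨K.toPointedCone (by rw [ConvexCone.Pointed, ← SetLike.mem_coe, hKcarrier]; exact subset_closure ⟨0, le_rfl, x, hx, by simp⟩), hKclosed⟩ hv').imp
        fun y h => ⟨fun w (hw : w ∈ K) => h.1 w hw, by rw [real_inner_comm]; exact h.2⟩
    have hyS : ∀ w ∈ feasDir C x, 0 ≤ ⟪w, y⟫ := fun w hw =>
      hy1 w (by rw [← SetLike.mem_coe, hKcarrier]; exact subset_closure hw)
    have hyx : ⟪x, y⟫ = 0 :=
      le_antisymm (by have := hyS _ hnxS; rwa [inner_neg_left, neg_nonneg] at this)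
        (hyS _ hxS)
    refine ⟨-y, ⟨?_, ?_⟩, ?_⟩
    · intro z hz
      have := hyS _ (hmemS z hz)
      rw [inner_sub_left, hyx, sub_zero] at this
      rw [inner_neg_left, real_inner_comm]
      linarith
    · rw [inner_neg_left, real_inner_comm, hyx, neg_zero]
    · rw [inner_neg_left]; linarith
  -- C itself is an exposed face
  have hCexp : IsExposedFace C C := by
    refine ⟨0, fun z _ => by simp, ?_⟩
    ext z; simp
  ext z
  simp only [Set.mem_sInter, Set.mem_setOf_eq, Set.mem_inter_iff]
  constructor
  · intro hz
    have hzC : z ∈ C := hz C ⟨hCexp, hx⟩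
    -- z ∈ tangentCone' C x
    have hzT : z ∈ tangentCone' C x := by
      by_contra hzT
      obtain ⟨ℓ, hℓN, hℓz⟩ := keyB z hzT
      have hzF : z ∈ {w ∈ C | ⟪ℓ, w⟫ = 0} :=
        hz _ ⟨⟨ℓ, hℓN.1, rfl⟩, hx, hℓN.2⟩
      exact absurd hzF.2 (ne_of_gt hℓz)
    have hnzT : -z ∈ tangentCone' C x := by
      by_contra hnzT
      obtain ⟨ℓ, hℓN, hℓz⟩ := keyB (-z) hnzT
      have hzF : z ∈ {w ∈ C | ⟪ℓ, w⟫ = 0} :=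
        hz _ ⟨⟨ℓ, hℓN.1, rfl⟩, hx, hℓN.2⟩
      rw [inner_neg_right, hzF.2, neg_zero] at hℓz
      exact lt_irrefl 0 hℓz
    exact ⟨hzC, hzT, by rwa [Set.mem_neg]⟩
  · rintro ⟨hzC, hzT, hznT⟩ F ⟨⟨ℓ, hℓC, rfl⟩, hxC, hℓx⟩
    have hℓN : ℓ ∈ normalCone' C x := ⟨hℓC, hℓx⟩
    refine ⟨hzC, le_antisymm (keyA ℓ hℓN z hzT) ?_⟩
    have := keyA ℓ hℓN (-z) (by rwa [Set.mem_neg] at hznT)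
    rw [inner_neg_right, neg_nonpos] at this
    exact this
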